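/- Let A be a unital Banach algebra over ℂ, let L_1, …, L_n ∈ A, let h_1, …, h_n ≥ 0 satisfy ‖L_j‖ ≤ 2h_j, and let p_1, …, p_n ∈ (0,1]. With expectation over stochastic sparsification, ‖ E[ (Σ_j L̂_j(b))² ] − (Σ_j L_j)² ‖ ≤ 4 Σ_j (1/p_j − 1) h_j². -/

import Mathlib

/-- The weight of a sparsification pattern `b`: `w(b) = ∏_j (if b j then p_j else 1 − p_j)`. -/
noncomputable def sparWeight {n : ℕ} (p : Fin n → ℝ) (b : Fin n → Bool) : ℝ :=
  ∏ j : Fin n, (if b j then p j else 1 - p j)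

/-- The sparsified term: `L̂_j(b) = (1/p_j) • L_j` if `b j` and `0` otherwise. -/
noncomputable def sparTerm {A : Type*} [NormedRing A] [NormedAlgebra ℂ A] {n : ℕ}
    (L : Fin n → A) (p : Fin n → ℝ) (b : Fin n → Bool) (j : Fin n) : A :=
  if b j then (1 / p j) • L j else 0

/-- The expectation over sparsification patterns: `E[g] = Σ_b w(b) • g(b)`. -/
noncomputable def sparExp {A : Type*} [NormedRing A] [NormedAlgebra ℂ A] {n : ℕ}
    (p : Fin n → ℝ) (g : (Fin n → Bool) → A) : A :=
  ∑ b : Fin n → Bool, sparWeight p b • g b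

lemma sum_prod_bool {n : ℕ} (ψ : Fin n → Bool → ℝ) :
    ∑ b : Fin n → Bool, ∏ j, ψ j (b j) = ∏ j, (ψ j true + ψ j false) := by
  classical
  have := Finset.prod_univ_sum (fun _ : Fin n => (Finset.univ : Finset Bool)) ψ
  simp only [Fintype.piFinset_univ] at this
  rw [← this]
  apply Finset.prod_congr rfl
  intro i _
  rw [Fintype.sum_bool]

lemma sparExp_pair {A : Type*} [NormedRing A] [NormedAlgebra ℂ A] {n : ℕ}
    (L : Fin n → A) (p : Fin n → ℝ) (hp0 : ∀ j, 0 < p j) (j k : Fin n) :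
    sparExp p (fun b => sparTerm L p b j * sparTerm L p b k)
      = (if j = k then 1 / p j else 1) • (L j * L k) := by
  classical
  have hterm : ∀ b : Fin n → Bool,
      sparWeight p b • (sparTerm L p b j * sparTerm L p b k)
        = (∏ i, ((if b i then p i else 1 - p i) *
            ((if i = j then (if b i then 1 / p j else 0) else 1) *
             (if i = k then (if b i then 1 / p k else 0) else 1)))) • (L j * L k) := by
    intro b
    have h1 : sparTerm L p b j * sparTerm L p b k
        = ((if b j then 1 / p j else 0) * (if b k then 1 / p k else 0)) • (L j * L k) := by
      unfold sparTerm
      cases hbj : b j <;> cases hbk : b k <;>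
        simp [smul_mul_smul_comm, smul_smul, mul_comm]
    rw [h1, smul_smul]
    congr 1
    rw [Finset.prod_mul_distrib, Finset.prod_mul_distrib]
    unfold sparWeight
    simp
  unfold sparExp
  simp only [hterm, ← Finset.sum_smul]
  rw [sum_prod_bool (fun i t => (if t then p i else 1 - p i) *
      ((if i = j then if t then 1 / p j else 0 else 1) *
       (if i = k then if t then 1 / p k else 0 else 1)))]
  congr 1
  by_cases hjk : j = k
  · subst hjk
    rw [Finset.prod_eq_single j]
    · have := (hp0 j).ne'
      simp only [if_pos rfl]
      simp only [if_true, Bool.false_eq_true, if_false]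
      field_simp
      ring
    · intro i _ hij
      simp [hij]
    · simp
  · rw [if_neg hjk]
    apply Finset.prod_eq_one
    intro i _
    by_cases hij : i = j
    · subst hij
      have := (hp0 i).ne'
      simp [hjk]
      try field_simp
    · by_cases hik : i = k
      · subst hik
        have := (hp0 i).ne'
        simp [hij, Ne.symm hjk]
        try field_simp
      · simp [hij, hik]; try ring

/-- The second-order error bound (ε₁ of Theorem 1):
`‖E[(Σ_j L̂_j)²] − (Σ_j L_j)²‖ ≤ 4 Σ_j (1/p_j − 1) h_j²`. -/
theorem stmt_10 {A : Type*} [NormedRing A] [NormedAlgebra ℂ A]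
    [CompleteSpace A] [NormOneClass A] (n : ℕ)
    (L : Fin n → A) (h : Fin n → ℝ) (hnn : ∀ j, 0 ≤ h j)
    (hL : ∀ j, ‖L j‖ ≤ 2 * h j)
    (p : Fin n → ℝ) (hp : ∀ j, p j ∈ Set.Ioc (0 : ℝ) 1) :
    ‖sparExp p (fun b => (∑ j : Fin n, sparTerm L p b j) ^ 2)
        - (∑ j : Fin n, L j) ^ 2‖
      ≤ 4 * ∑ j : Fin n, (1 / p j - 1) * (h j) ^ 2 := by
  classical
  have hp0 : ∀ j, (0:ℝ) < p j := fun j => (hp j).1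
  have hexp : sparExp p (fun b => (∑ j : Fin n, sparTerm L p b j) ^ 2)
      = ∑ j : Fin n, ∑ k : Fin n,
          sparExp p (fun b => sparTerm L p b j * sparTerm L p b k) := by
    unfold sparExp
    simp only [sq, Finset.sum_mul_sum, Finset.smul_sum]
    rw [Finset.sum_comm]
    apply Finset.sum_congr rfl
    intro j _
    rw [Finset.sum_comm]
  have hdiff : sparExp p (fun b => (∑ j : Fin n, sparTerm L p b j) ^ 2)
        - (∑ j : Fin n, L j) ^ 2
      = ∑ j : Fin n, (1 / p j - 1) • (L j * L j) := by
    rw [hexp, sq, Finset.sum_mul_sum, ← Finset.sum_sub_distrib]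
    apply Finset.sum_congr rfl
    intro j _
    rw [← Finset.sum_sub_distrib]
    rw [Finset.sum_eq_single j]
    · rw [sparExp_pair L p hp0 j j, if_pos rfl, sub_smul, one_smul]
    · intro k _ hkj
      rw [sparExp_pair L p hp0 j k, if_neg (fun e => hkj e.symm), one_smul, sub_self]
    · simp
  rw [hdiff]
  calc ‖∑ j : Fin n, (1 / p j - 1) • (L j * L j)‖
      ≤ ∑ j : Fin n, ‖(1 / p j - 1) • (L j * L j)‖ := norm_sum_le _ _
    _ ≤ ∑ j : Fin n, (1 / p j - 1) * (4 * h j ^ 2) := by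
        apply Finset.sum_le_sum
        intro j _
        rw [norm_smul, Real.norm_eq_abs]
        have hpj := hp j
        have h1 : (0:ℝ) ≤ 1 / p j - 1 := by
          rw [sub_nonneg, le_div_iff₀ hpj.1]
          simpa using hpj.2
        rw [abs_of_nonneg h1]
        apply mul_le_mul_of_nonneg_left _ h1
        calc ‖L j * L j‖ ≤ ‖L j‖ * ‖L j‖ := norm_mul_le _ _
          _ ≤ (2 * h j) * (2 * h j) := by
              apply mul_le_mul (hL j) (hL j) (norm_nonneg _)
              linarith [hnn j]
          _ = 4 * h j ^ 2 := by ring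
    _ = 4 * ∑ j : Fin n, (1 / p j - 1) * (h j) ^ 2 := by
        rw [Finset.mul_sum]
        apply Finset.sum_congr rfl
        intro j _
        ring
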